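/- Let D ∈ ℝ^{n×N} be a tight frame, and suppose there exists a nonzero (s−1)-sparse vector v ∈ ker D. Then every f ∈ ℝ^n is effectively s-synthesis-sparse: there exists an effectively s-sparse u' ∈ ℝ^N (‖u'‖₁ ≤ √s ‖u'‖₂) with f = Du'. -/

import Mathlib

noncomputable def norm2 {ι : Type*} [Fintype ι] (x : ι → ℝ) : ℝ :=
  Real.sqrt (∑ i, x i ^ 2)

noncomputable def norm1 {ι : Type*} [Fintype ι] (x : ι → ℝ) : ℝ := ∑ i, |x i|

lemma norm2_eq_norm {ι : Type*} [Fintype ι] (x : ι → ℝ) :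
    norm2 x = ‖(WithLp.equiv 2 (ι → ℝ)).symm x‖ := by
  rw [EuclideanSpace.norm_eq]
  unfold norm2
  congr 1
  refine Finset.sum_congr rfl fun i _ => ?_
  rw [Real.norm_eq_abs, sq_abs]
  rfl

lemma norm2_nonneg {ι : Type*} [Fintype ι] (x : ι → ℝ) : 0 ≤ norm2 x :=
  Real.sqrt_nonneg _

lemma norm1_nonneg {ι : Type*} [Fintype ι] (x : ι → ℝ) : 0 ≤ norm1 x :=
  Finset.sum_nonneg fun _ _ => abs_nonneg _

lemma norm2_smul {ι : Type*} [Fintype ι] (c : ℝ) (x : ι → ℝ) :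
    norm2 (c • x) = |c| * norm2 x := by
  have h : (WithLp.equiv 2 (ι → ℝ)).symm (c • x)
      = c • (WithLp.equiv 2 (ι → ℝ)).symm x := rfl
  rw [norm2_eq_norm, norm2_eq_norm, h, norm_smul, Real.norm_eq_abs]

lemma norm2_add_ge {ι : Type*} [Fintype ι] (x y : ι → ℝ) :
    norm2 x - norm2 y ≤ norm2 (x + y) := by
  have h : (WithLp.equiv 2 (ι → ℝ)).symm (x + y)
      = (WithLp.equiv 2 (ι → ℝ)).symm x + (WithLp.equiv 2 (ι → ℝ)).symm y := rfl
  rw [norm2_eq_norm, norm2_eq_norm, norm2_eq_norm, h]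
  set X := (WithLp.equiv 2 (ι → ℝ)).symm x
  set Y := (WithLp.equiv 2 (ι → ℝ)).symm y
  have h2 : ‖(X + Y) - Y‖ ≤ ‖X + Y‖ + ‖Y‖ := norm_sub_le _ _
  simp only [add_sub_cancel_right] at h2
  linarith

lemma norm1_add_le {ι : Type*} [Fintype ι] (x y : ι → ℝ) :
    norm1 (x + y) ≤ norm1 x + norm1 y := by
  rw [norm1, norm1, norm1, ← Finset.sum_add_distrib]
  exact Finset.sum_le_sum fun i _ => abs_add_le _ _

lemma norm1_smul {ι : Type*} [Fintype ι] (c : ℝ) (x : ι → ℝ) :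
    norm1 (c • x) = |c| * norm1 x := by
  simp [norm1, abs_mul, Finset.mul_sum]

lemma norm2_pos {ι : Type*} [Fintype ι] {x : ι → ℝ} (hx : x ≠ 0) : 0 < norm2 x := by
  rcases (norm2_nonneg x).lt_or_eq with h | h
  · exact h
  · exfalso; apply hx
    have : ‖(WithLp.equiv 2 (ι → ℝ)).symm x‖ = 0 := by rw [← norm2_eq_norm, ← h]
    have := norm_eq_zero.mp this
    funext i
    have hx0 : x = 0 := by simpa using congrArg (WithLp.equiv 2 (ι → ℝ)) this
    exact congrFun hx0 i

/-- Cauchy–Schwarz sparse bound. -/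
lemma norm1_le_sqrt_card {ι : Type*} [Fintype ι] [DecidableEq ι] (x : ι → ℝ) :
    norm1 x ≤ Real.sqrt ((Finset.univ.filter fun j => x j ≠ 0).card) * norm2 x := by
  set T := Finset.univ.filter fun j => x j ≠ 0 with hT
  have h1 : norm1 x = ∑ i ∈ T, |x i| := by
    rw [norm1]
    refine (Finset.sum_subset (Finset.subset_univ T) ?_).symm
    intro i _ hi
    simp [hT] at hi
    simp [hi]
  have h2 : (∑ i ∈ T, |x i|) ^ 2 ≤ T.card * ∑ i ∈ T, |x i| ^ 2 :=
    sq_sum_le_card_mul_sum_sq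
  have h3 : (∑ i ∈ T, |x i| ^ 2) ≤ ∑ i, x i ^ 2 := by
    simp_rw [sq_abs]
    exact Finset.sum_le_sum_of_subset_of_nonneg (Finset.subset_univ T)
      fun i _ _ => sq_nonneg _
  have h4 : (norm1 x) ^ 2 ≤ (T.card : ℝ) * ∑ i, x i ^ 2 := by
    rw [h1]
    calc (∑ i ∈ T, |x i|) ^ 2 ≤ T.card * ∑ i ∈ T, |x i| ^ 2 := h2
    _ ≤ (T.card : ℝ) * ∑ i, x i ^ 2 := by
        apply mul_le_mul_of_nonneg_left h3 (Nat.cast_nonneg _)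
  have := Real.sqrt_le_sqrt h4
  rw [Real.sqrt_sq (norm1_nonneg x)] at this
  rwa [Real.sqrt_mul (Nat.cast_nonneg _)] at this

theorem stmt16 (n N s : ℕ) (hs : 1 ≤ s)
    (D : Matrix (Fin n) (Fin N) ℝ) (hD : D * D.transpose = 1)
    (v : Fin N → ℝ) (hv0 : v ≠ 0)
    (hvsp : (Finset.univ.filter fun j => v j ≠ 0).card ≤ s - 1)
    (hvker : D.mulVec v = 0) :
    ∀ f : Fin n → ℝ, ∃ u' : Fin N → ℝ,
      norm1 u' ≤ Real.sqrt s * norm2 u' ∧ D.mulVec u' = f := by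
  intro f
  set u := D.transpose.mulVec f with hu
  have hDu : D.mulVec u = f := by
    rw [hu, Matrix.mulVec_mulVec, hD, Matrix.one_mulVec]
  -- sparse bound for v
  have hsv : norm1 v ≤ Real.sqrt (s - 1 : ℕ) * norm2 v := by
    refine (norm1_le_sqrt_card v).trans ?_
    apply mul_le_mul_of_nonneg_right _ (norm2_nonneg v)
    exact Real.sqrt_le_sqrt (by exact_mod_cast hvsp)
  have hvpos : 0 < norm2 v := norm2_pos hv0
  have hlt : Real.sqrt (s - 1 : ℕ) < Real.sqrt s := by
    apply Real.sqrt_lt_sqrt (Nat.cast_nonneg _)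
    exact_mod_cast Nat.sub_lt (by omega) one_pos
  set δ : ℝ := norm2 v * (Real.sqrt s - Real.sqrt (s - 1 : ℕ)) with hδ
  have hδpos : 0 < δ := mul_pos hvpos (by linarith)
  set K : ℝ := norm1 u + Real.sqrt s * norm2 u with hK
  have hKnn : 0 ≤ K := by
    have := norm1_nonneg u
    have := norm2_nonneg u
    have := Real.sqrt_nonneg (s : ℝ)
    positivity
  set c : ℝ := (K + 1) / δ with hc
  have hcpos : 0 < c := div_pos (by linarith) hδpos
  refine ⟨c • v + u, ?_, ?_⟩
  · have hL : norm1 (c • v + u) ≤ c * norm1 v + norm1 u := by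
      calc norm1 (c • v + u) ≤ norm1 (c • v) + norm1 u := norm1_add_le _ _
      _ = c * norm1 v + norm1 u := by rw [norm1_smul, abs_of_pos hcpos]
    have hR : c * norm2 v - norm2 u ≤ norm2 (c • v + u) := by
      have := norm2_add_ge (c • v) u
      rwa [norm2_smul, abs_of_pos hcpos] at this
    have hcδ : c * δ = K + 1 := by
      rw [hc, div_mul_cancel₀]
      exact ne_of_gt hδpos
    have key : c * norm1 v + norm1 u ≤ Real.sqrt s * (c * norm2 v - norm2 u) := by
      have h1 : c * norm1 v ≤ c * (Real.sqrt (s - 1 : ℕ) * norm2 v) :=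
        mul_le_mul_of_nonneg_left hsv hcpos.le
      have h2 : c * (norm2 v * (Real.sqrt s - Real.sqrt (s - 1 : ℕ))) = K + 1 := hcδ
      nlinarith [Real.sqrt_nonneg (s : ℝ)]
    calc norm1 (c • v + u) ≤ c * norm1 v + norm1 u := hL
    _ ≤ Real.sqrt s * (c * norm2 v - norm2 u) := key
    _ ≤ Real.sqrt s * norm2 (c • v + u) :=
        mul_le_mul_of_nonneg_left hR (Real.sqrt_nonneg _)
  · rw [Matrix.mulVec_add, Matrix.mulVec_smul, hvker, hDu]
    simp
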